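/- Let R be the valuation ring of a field K complete with respect to a non-discrete rank-1 valuation w, with maximal ideal 𝔪. Suppose f ∈ R[[X]] satisfies w(f) = 0 and all coefficients of f lie in 𝔪. Then there exists a monic irreducible polynomial q(X) ∈ R[X] of positive degree with constant term q₀ ∈ 𝔪, such that q divides f in R[[X]], and the quotient g = f/q again satisfies w(g) = 0 with all coefficients in 𝔪. -/

import Mathlib

open PowerSeries Filter Set

/-- An additive rank-1 (real-valued) non-archimedean valuation on a field `K`,
with values in `EReal` (real numbers on nonzero elements, `⊤` at `0`). -/
structure AddRealValuation (K : Type*) [Field K] where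
  w : K → EReal
  map_zero' : w 0 = ⊤
  finite' : ∀ x : K, x ≠ 0 → ∃ r : ℝ, w x = (r : EReal)
  map_one' : w 1 = 0
  map_mul' : ∀ x y : K, w (x * y) = w x + w y
  map_neg' : ∀ x : K, w (-x) = w x
  add_le' : ∀ x y : K, min (w x) (w y) ≤ w (x + y)

namespace AddRealValuation

variable {K : Type*} [Field K] (v : AddRealValuation K)

/-- The valuation is non-discrete: there exist elements of arbitrarily
small positive valuation. -/
def Nondiscrete : Prop := ∀ ε : ℝ, 0 < ε → ∃ x : K, 0 < v.w x ∧ v.w x < (ε : EReal)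

/-- `K` is complete with respect to `v`: every Cauchy sequence converges. -/
def IsComplete : Prop :=
  ∀ u : ℕ → K, (∀ M : ℝ, ∃ N : ℕ, ∀ m ≥ N, ∀ n ≥ N, (M : EReal) ≤ v.w (u m - u n)) →
    ∃ L : K, ∀ M : ℝ, ∃ N : ℕ, ∀ n ≥ N, (M : EReal) ≤ v.w (u n - L)

/-- The valuation ring `R = {x : K | w x ≥ 0}` of `v`. -/
def subring : Subring K where
  carrier := {x | 0 ≤ v.w x}
  zero_mem' := by show (0:EReal) ≤ v.w 0; rw [v.map_zero']; exact le_top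
  one_mem' := by show (0:EReal) ≤ v.w 1; rw [v.map_one']
  add_mem' := fun hx hy => le_trans (le_min hx hy) (v.add_le' _ _)
  mul_mem' := fun hx hy => by
    show (0:EReal) ≤ v.w _; rw [v.map_mul']; exact add_nonneg hx hy
  neg_mem' := fun {x} hx => by show (0:EReal) ≤ v.w (-x); rw [v.map_neg']; exact hx

/-- The extension of `v` to power series over `K`: the infimum of the
valuations of the coefficients. -/
noncomputable def wS (f : PowerSeries K) : EReal := ⨅ i : ℕ, v.w (PowerSeries.coeff (R := K) i f)

/-- The extension of `v` to power series over the valuation ring `R` of `v`. -/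
noncomputable def wR (f : PowerSeries v.subring) : EReal :=
  ⨅ i : ℕ, v.w ((PowerSeries.coeff (R := v.subring) i f : v.subring) : K)

/-- `f` is a convergent power series (lies in the Tate algebra `K{X}`):
the valuations of the coefficients tend to `∞`. -/
def Conv (f : PowerSeries K) : Prop :=
  ∀ M : ℝ, ∃ N : ℕ, ∀ i ≥ N, (M : EReal) ≤ v.w (PowerSeries.coeff (R := K) i f)

/-- The series `f(c) = Σ fᵢ cⁱ` (with `f` over the valuation ring `R`) converges to `0`:
the valuations of the partial sums tend to `∞`. -/
def EvalZeroR (f : PowerSeries v.subring) (c : v.subring) : Prop :=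
  ∀ M : ℝ, ∃ N : ℕ, ∀ n ≥ N,
    (M : EReal) ≤ v.w ((∑ i ∈ Finset.range n, PowerSeries.coeff (R := v.subring) i f * c ^ i : v.subring) : K)


section Basic

lemma w_ne_bot (x : K) : v.w x ≠ ⊥ := by
  by_cases hx : x = 0
  · rw [hx, v.map_zero']; simp
  · obtain ⟨r, hr⟩ := v.finite' x hx
    rw [hr]; exact EReal.coe_ne_bot r

lemma w_top_iff {x : K} : v.w x = ⊤ ↔ x = 0 := by
  constructor
  · intro h
    by_contra hx
    obtain ⟨r, hr⟩ := v.finite' x hx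
    rw [hr] at h; exact (EReal.coe_ne_top r) h
  · intro h; rw [h, v.map_zero']

lemma eq_zero_of_forall_le_w {x : K} (h : ∀ M : ℝ, (M : EReal) ≤ v.w x) : x = 0 := by
  rw [← v.w_top_iff]
  rw [EReal.eq_top_iff_forall_lt]
  intro y
  exact lt_of_lt_of_le (by exact_mod_cast (lt_add_one y)) (h (y+1))

lemma w_sub_symm (x y : K) : v.w (x - y) = v.w (y - x) := by
  rw [← v.map_neg' (x - y)]; ring_nf

lemma w_min_le_add {x y : K} {M : EReal} (hx : M ≤ v.w x) (hy : M ≤ v.w y) :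
    M ≤ v.w (x + y) :=
  le_trans (le_min hx hy) (v.add_le' x y)

lemma w_min_le_sub {x y : K} {M : EReal} (hx : M ≤ v.w x) (hy : M ≤ v.w y) :
    M ≤ v.w (x - y) := by
  rw [sub_eq_add_neg]
  exact v.w_min_le_add hx (by rw [v.map_neg']; exact hy)

lemma w_sum {ι : Type*} {s : Finset ι} {f : ι → K} {M : EReal}
    (h : ∀ i ∈ s, M ≤ v.w (f i)) : M ≤ v.w (∑ i ∈ s, f i) := by
  classical
  induction s using Finset.induction with
  | empty => simp [v.map_zero']
  | insert a s hni ih =>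
      rw [Finset.sum_insert hni]
      exact v.w_min_le_add (h a (Finset.mem_insert_self a s))
        (ih (fun i hi => h i (Finset.mem_insert_of_mem hi)))

lemma w_mul_ge {x y : K} {a b : ℝ} (hx : (a : EReal) ≤ v.w x) (hy : (b : EReal) ≤ v.w y) :
    ((a + b : ℝ) : EReal) ≤ v.w (x * y) := by
  rw [v.map_mul', EReal.coe_add]
  exact add_le_add hx hy

lemma w_inv {x : K} {a : ℝ} (hx : v.w x = (a : EReal)) : v.w x⁻¹ = ((-a : ℝ) : EReal) := by
  have hx0 : x ≠ 0 := by
    intro h; rw [h, v.map_zero'] at hx; exact (EReal.coe_ne_top a) hx.symm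
  have h1 := v.map_mul' x x⁻¹
  rw [mul_inv_cancel₀ hx0, v.map_one', hx] at h1
  obtain ⟨c, hc⟩ := v.finite' x⁻¹ (inv_ne_zero hx0)
  rw [hc] at h1 ⊢
  rw [← EReal.coe_add] at h1
  norm_cast at h1 ⊢
  linarith

lemma le_w_of_forall_min {A B : EReal} (h : ∀ M : ℝ, min B (M : EReal) ≤ A) : B ≤ A := by
  rcases eq_or_ne B ⊤ with hB | hB
  · subst hB
    refine top_le_iff.mpr ?_
    rw [EReal.eq_top_iff_forall_lt]
    intro y
    calc ((y:EReal)) < ((y+1:ℝ):EReal) := by exact_mod_cast lt_add_one y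
    _ = min ⊤ ((y+1:ℝ):EReal) := (min_eq_right le_top).symm
    _ ≤ A := h (y+1)
  · obtain ⟨x, hx1, _⟩ := EReal.lt_iff_exists_real_btwn.mp (lt_top_iff_ne_top.mpr hB)
    have := h x
    rwa [min_eq_left hx1.le] at this

end Basic

section Limits

/-- convergence of a sequence in `K` w.r.t. `v`. -/
def Tds (s : ℕ → K) (L : K) : Prop :=
  ∀ M : ℝ, ∃ N : ℕ, ∀ n ≥ N, (M : EReal) ≤ v.w (s n - L)

lemma tds_unique {s : ℕ → K} {L L' : K} (h : v.Tds s L) (h' : v.Tds s L') : L = L' := by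
  have : ∀ M : ℝ, (M : EReal) ≤ v.w (L - L') := by
    intro M
    obtain ⟨N, hN⟩ := h M
    obtain ⟨N', hN'⟩ := h' M
    have h1 := hN (max N N') (le_max_left _ _)
    have h2 := hN' (max N N') (le_max_right _ _)
    have : L - L' = (s (max N N') - L') - (s (max N N') - L) := by ring
    rw [this]
    exact v.w_min_le_sub h2 h1
  exact sub_eq_zero.mp (v.eq_zero_of_forall_le_w this)

lemma tds_const (c : K) : v.Tds (fun _ => c) c := by
  intro M; exact ⟨0, fun n _ => by simp [v.map_zero']⟩

lemma tds_add {s t : ℕ → K} {L L' : K} (h : v.Tds s L) (h' : v.Tds t L') :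
    v.Tds (fun n => s n + t n) (L + L') := by
  intro M
  obtain ⟨N, hN⟩ := h M
  obtain ⟨N', hN'⟩ := h' M
  refine ⟨max N N', fun n hn => ?_⟩
  have : s n + t n - (L + L') = (s n - L) + (t n - L') := by ring
  rw [this]
  exact v.w_min_le_add (hN n (le_trans (le_max_left _ _) hn)) (hN' n (le_trans (le_max_right _ _) hn))

lemma tds_mul_const {s : ℕ → K} {L : K} (c : K) (h : v.Tds s L) :
    v.Tds (fun n => c * s n) (c * L) := by
  rcases eq_or_ne c 0 with hc | hc
  · subst hc; simpa using v.tds_const 0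
  · obtain ⟨a, ha⟩ := v.finite' c hc
    intro M
    obtain ⟨N, hN⟩ := h (M - a)
    refine ⟨N, fun n hn => ?_⟩
    have : c * s n - c * L = c * (s n - L) := by ring
    rw [this, v.map_mul', ha]
    calc (M : EReal) = ((a + (M - a) : ℝ) : EReal) := by norm_num
    _ ≤ (a : EReal) + v.w (s n - L) := by
        rw [EReal.coe_add]; exact add_le_add le_rfl (hN n hn)

lemma tds_shift {s : ℕ → K} {L : K} (k : ℕ) (h : v.Tds s L) :
    v.Tds (fun n => s (n + k)) L := by
  intro M
  obtain ⟨N, hN⟩ := h M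
  exact ⟨N, fun n hn => hN (n + k) (le_trans hn (Nat.le_add_right n k))⟩

lemma tds_w_le {s : ℕ → K} {L : K} {B : EReal} (h : v.Tds s L)
    (hb : ∀ n, B ≤ v.w (s n)) : B ≤ v.w L := by
  refine le_w_of_forall_min (fun M => ?_)
  obtain ⟨N, hN⟩ := h M
  have : L = s N - (s N - L) := by ring
  rw [this]
  exact v.w_min_le_sub (le_trans (min_le_left _ _) (hb N)) (le_trans (min_le_right _ _) (hN N le_rfl))

/-- partial sums -/
def psum (a : ℕ → K) (N : ℕ) : K := ∑ m ∈ Finset.range N, a m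

lemma w_psum_sub {a : ℕ → K} {M : EReal} {m n : ℕ} (hmn : m ≤ n)
    (h : ∀ k, m ≤ k → M ≤ v.w (a k)) : M ≤ v.w (psum a n - psum a m) := by
  have : psum a n - psum a m = ∑ k ∈ Finset.Ico m n, a k := by
    rw [psum, psum, ← Finset.sum_range_add_sum_Ico a hmn]; ring
  rw [this]
  exact v.w_sum (fun i hi => h i (Finset.mem_Ico.mp hi).1)

lemma series_exists (hcomp : v.IsComplete) {a : ℕ → K}
    (h : ∀ M : ℝ, ∃ N, ∀ m ≥ N, (M : EReal) ≤ v.w (a m)) :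
    ∃ L, v.Tds (psum a) L := by
  refine hcomp (psum a) (fun M => ?_)
  obtain ⟨N, hN⟩ := h M
  refine ⟨N, fun m hm n hn => ?_⟩
  rcases le_total n m with hnm | hnm
  · exact v.w_psum_sub hnm (fun k hk => hN k (le_trans hn hk))
  · rw [v.w_sub_symm]
    exact v.w_psum_sub hnm (fun k hk => hN k (le_trans hm hk))

lemma series_bound {a : ℕ → K} {L : K} {B : EReal} (h : v.Tds (psum a) L)
    (hb : ∀ m, B ≤ v.w (a m)) : B ≤ v.w L :=
  v.tds_w_le h (fun n => v.w_sum (fun i _ => hb i))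

lemma series_tail_bound {a : ℕ → K} {L : K} {B : EReal} (h : v.Tds (psum a) L)
    (hb : ∀ m, 1 ≤ m → B ≤ v.w (a m)) : B ≤ v.w (L - a 0) := by
  have h' : v.Tds (fun n => psum a (n+1) - a 0) (L - a 0) := by
    have := v.tds_add (v.tds_shift 1 h) (v.tds_const (-(a 0)))
    simpa [sub_eq_add_neg] using this
  refine v.tds_w_le h' (fun n => ?_)
  have : psum a (n+1) - a 0 = psum a (n+1) - psum a 1 := by simp [psum]
  rw [this]
  exact v.w_psum_sub (by omega) (fun k hk => hb k hk)

end Limits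

section Sseries

/-- The auxiliary series `V = 1 + ∑_{1≤k≤d} u_{d-k} X^k`. -/
noncomputable def Vser (u : ℕ → K) (d : ℕ) : PowerSeries K :=
  PowerSeries.mk (fun k => if k = 0 then 1 else if k ≤ d then u (d - k) else 0)

/-- `S = V⁻¹` as a formal power series. -/
noncomputable def Sser (u : ℕ → K) (d : ℕ) : PowerSeries K :=
  PowerSeries.invOfUnit (Vser u d) 1

/-- coefficients of `S`. -/
noncomputable def Scoe (u : ℕ → K) (d : ℕ) (m : ℕ) : K :=
  PowerSeries.coeff (R := K) m (Sser u d)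

lemma Vser_mul_Sser (u : ℕ → K) (d : ℕ) : Vser u d * Sser u d = 1 := by
  apply PowerSeries.mul_invOfUnit
  simp [Vser, ← PowerSeries.coeff_zero_eq_constantCoeff]

lemma Sser_conv (u : ℕ → K) (d : ℕ) (p : ℕ) :
    ∑ a ∈ Finset.range (p+1), (PowerSeries.coeff (R := K) a (Vser u d)) * Scoe u d (p - a)
      = if p = 0 then 1 else 0 := by
  have h := congrArg (PowerSeries.coeff (R := K) p) (Vser_mul_Sser u d)
  rw [PowerSeries.coeff_mul, Finset.Nat.sum_antidiagonal_eq_sum_range_succ_mk] at h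
  rw [show (∑ a ∈ Finset.range (p+1), (PowerSeries.coeff (R := K) a (Vser u d)) * Scoe u d (p - a))
    = ∑ a ∈ Finset.range (p+1), (PowerSeries.coeff (R := K) a (Vser u d))
        * (PowerSeries.coeff (R := K) (p - a) (Sser u d)) from rfl, h]
  simp [PowerSeries.coeff_one]

lemma Scoe_zero (u : ℕ → K) (d : ℕ) : Scoe u d 0 = 1 := by
  have := Sser_conv u d 0
  simpa [Vser, Scoe] using this

lemma Scoe_succ (u : ℕ → K) (d : ℕ) (p : ℕ) (hp : 1 ≤ p) :
    Scoe u d p = - ∑ a ∈ Finset.Ico 1 (p+1),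
      (PowerSeries.coeff (R := K) a (Vser u d)) * Scoe u d (p - a) := by
  have h := Sser_conv u d p
  rw [if_neg (by omega)] at h
  rw [Finset.range_eq_Ico, Finset.sum_eq_sum_Ico_succ_bot (by omega : 0 < p + 1)] at h
  have h0 : (PowerSeries.coeff (R := K) 0 (Vser u d)) = (1:K) := by simp [Vser]
  rw [h0, one_mul, Nat.sub_zero] at h
  exact eq_neg_of_add_eq_zero_left h

variable {r t : ℝ} {d : ℕ} {u u' : ℕ → K}

/-- bound predicate for the unknown vector `u`. -/
def Bd (v : AddRealValuation K) (u : ℕ → K) (d : ℕ) (r t : ℝ) : Prop :=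
  ∀ l, l < d → ((((d:ℝ) - (l:ℝ))*r + t : ℝ) : EReal) ≤ v.w (u l)

lemma w_Vcoe (hu : Bd v u d r 0) {a : ℕ} (ha : 1 ≤ a) :
    (((a:ℝ)*r : ℝ) : EReal) ≤ v.w (PowerSeries.coeff (R := K) a (Vser u d)) := by
  rw [Vser, PowerSeries.coeff_mk, if_neg (by omega)]
  by_cases had : a ≤ d
  · rw [if_pos had]
    have := hu (d - a) (by omega)
    have hc : ((d:ℝ) - ((d - a : ℕ):ℝ))*r + 0 = (a:ℝ)*r := by
      have : ((d - a : ℕ):ℝ) = (d:ℝ) - (a:ℝ) := by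
        push_cast [Nat.cast_sub had]; ring
      rw [this]; ring
    rwa [hc] at this
  · rw [if_neg had, v.map_zero']; exact le_top

lemma Scoe_bound (hr : 0 ≤ r) (hu : Bd v u d r 0) :
    ∀ m : ℕ, (((m:ℝ)*r : ℝ) : EReal) ≤ v.w (Scoe u d m) := by
  intro m
  induction m using Nat.strong_induction_on with
  | _ m ih =>
    rcases Nat.eq_zero_or_pos m with hm | hm
    · subst hm; rw [Scoe_zero]; simp [v.map_one']
    · rw [Scoe_succ u d m hm, v.map_neg']
      refine v.w_sum (fun a ha => ?_)
      rw [Finset.mem_Ico] at ha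
      have h1 := w_Vcoe (v := v) hu ha.1
      have h2 := ih (m - a) (by omega)
      have := v.w_mul_ge h1 h2
      refine le_trans ?_ this
      rw [EReal.coe_le_coe_iff]
      have : ((m - a : ℕ):ℝ) = (m:ℝ) - (a:ℝ) := by
        rw [Nat.cast_sub (by omega)]
      rw [this]; nlinarith [ha.1, ha.2]

lemma Scoe_lip (hr : 0 ≤ r) (hu : Bd v u d r 0) (hu' : Bd v u' d r 0)
    (hdiff : ∀ l, l < d → ((((d:ℝ) - (l:ℝ))*r + t : ℝ) : EReal) ≤ v.w (u l - u' l)) :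
    ∀ m : ℕ, (((m:ℝ)*r + t : ℝ) : EReal) ≤ v.w (Scoe u d m - Scoe u' d m) := by
  intro m
  induction m using Nat.strong_induction_on with
  | _ m ih =>
    rcases Nat.eq_zero_or_pos m with hm | hm
    · subst hm; rw [Scoe_zero, Scoe_zero, sub_self, v.map_zero']; exact le_top
    · rw [Scoe_succ u d m hm, Scoe_succ u' d m hm]
      rw [show -∑ a ∈ Finset.Ico 1 (m+1), (PowerSeries.coeff (R := K) a (Vser u d)) * Scoe u d (m - a)
          - -∑ a ∈ Finset.Ico 1 (m+1), (PowerSeries.coeff (R := K) a (Vser u' d)) * Scoe u' d (m - a)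
        = -∑ a ∈ Finset.Ico 1 (m+1),
            ((PowerSeries.coeff (R := K) a (Vser u d) - PowerSeries.coeff (R := K) a (Vser u' d)) * Scoe u d (m - a)
             + PowerSeries.coeff (R := K) a (Vser u' d) * (Scoe u d (m - a) - Scoe u' d (m - a)))
        from by rw [neg_sub_neg, ← Finset.sum_sub_distrib, ← Finset.sum_neg_distrib];
                exact Finset.sum_congr rfl (fun a _ => by ring)]
      rw [v.map_neg']
      refine v.w_sum (fun a ha => ?_)
      rw [Finset.mem_Ico] at ha
      have hma : ((m - a : ℕ):ℝ) = (m:ℝ) - (a:ℝ) := by rw [Nat.cast_sub (by omega)]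
      refine v.w_min_le_add ?_ ?_
      · -- (V_a - V'_a) * S u (m-a)
        have hV : (((a:ℝ)*r + t : ℝ) : EReal)
            ≤ v.w (PowerSeries.coeff (R := K) a (Vser u d) - PowerSeries.coeff (R := K) a (Vser u' d)) := by
          rw [Vser, Vser, PowerSeries.coeff_mk, PowerSeries.coeff_mk,
            if_neg (by omega : ¬ a = 0), if_neg (by omega : ¬ a = 0)]
          by_cases had : a ≤ d
          · rw [if_pos had, if_pos had]
            have := hdiff (d - a) (by omega)
            have hc : ((d:ℝ) - ((d - a : ℕ):ℝ))*r + t = (a:ℝ)*r + t := by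
              rw [Nat.cast_sub had]; ring
            rwa [hc] at this
          · rw [if_neg had, if_neg had, sub_self, v.map_zero']; exact le_top
        have hS := Scoe_bound (v := v) hr hu (m - a)
        have := v.w_mul_ge hV hS
        refine le_trans ?_ this
        rw [EReal.coe_le_coe_iff, hma]
        nlinarith [ha.1, ha.2]
      · have hV := w_Vcoe (v := v) hu' ha.1
        have hS := ih (m - a) (by omega)
        have := v.w_mul_ge hV hS
        refine le_trans ?_ this
        rw [EReal.coe_le_coe_iff, hma]
        nlinarith [ha.1, ha.2]

end Sseries

section Core

lemma er_shift {x : EReal} (hx : x ≠ ⊥) {a b : ℝ} (h : (a:EReal) ≤ x + (b:EReal)) :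
    ((a - b : ℝ) : EReal) ≤ x := by
  induction x with
  | bot => exact absurd rfl hx
  | coe y =>
      rw [← EReal.coe_add] at h
      rw [EReal.coe_le_coe_iff] at h ⊢
      linarith
  | top => exact le_top

lemma tds_neg {s : ℕ → K} {L : K} (h : v.Tds s L) : v.Tds (fun n => - s n) (-L) := by
  intro M
  obtain ⟨N, hN⟩ := h M
  refine ⟨N, fun n hn => ?_⟩
  rw [show -s n - -L = -(s n - L) by ring, v.map_neg']
  exact hN n hn

lemma tds_sub {s t : ℕ → K} {L L' : K} (h : v.Tds s L) (h' : v.Tds t L') :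
    v.Tds (fun n => s n - t n) (L - L') := by
  have := v.tds_add h (v.tds_neg h')
  simpa [sub_eq_add_neg] using this

lemma tds_finset_sum {ι : Type*} (s : Finset ι) (f : ι → ℕ → K) (L : ι → K)
    (h : ∀ i ∈ s, v.Tds (f i) (L i)) :
    v.Tds (fun n => ∑ i ∈ s, f i n) (∑ i ∈ s, L i) := by
  classical
  induction s using Finset.induction with
  | empty => simpa using v.tds_const 0
  | insert a s hni ih =>
      have h1 := h a (Finset.mem_insert_self a s)
      have h2 := ih (fun i hi => h i (Finset.mem_insert_of_mem hi))
      have := v.tds_add h1 h2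
      simpa [Finset.sum_insert hni] using this

open Classical in
/-- The coefficients of the cofactor candidate, given `u`. -/
noncomputable def gfun (v : AddRealValuation K) (F : ℕ → K) (d : ℕ) (u : ℕ → K) (i : ℕ) : K :=
  if h : ∃ L, v.Tds (psum (fun m => F (i + d + m) * Scoe u d m)) L then h.choose else 0

/-- The contraction map. -/
noncomputable def Tmap (v : AddRealValuation K) (F : ℕ → K) (d : ℕ) (u : ℕ → K) : ℕ → K :=
  fun n =>
    if n < d then
      (F d)⁻¹ * (F n - (∑ l ∈ Finset.range n, u l * gfun v F d u (n - l))
        - u n * (gfun v F d u 0 - F d))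
    else 0

variable {F : ℕ → K} {d : ℕ} {r δ sd : ℝ}

section Estimates

variable (hd : 1 ≤ d) (hr : 0 < r) (hδ : 0 < δ)
  (hFd : v.w (F d) = (sd : EReal))
  (hFnn : ∀ j, (0:EReal) ≤ v.w (F j))
  (hgap : ∀ j, j ≠ d → ((sd + (d:ℝ)*r + δ : ℝ) : EReal) ≤ v.w (F j) + (((j:ℝ)*r : ℝ) : EReal))

include hgap in
lemma hgap' : ∀ j : ℕ, j ≠ d → ((sd + (d:ℝ)*r + δ - (j:ℝ)*r : ℝ) : EReal) ≤ v.w (F j) :=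
  fun j hj => er_shift (v.w_ne_bot (F j)) (hgap j hj)

include hr hFnn in
lemma gser_ex (hcomp : v.IsComplete) {u : ℕ → K} (hu : v.Bd u d r 0) (i : ℕ) :
    v.Tds (psum (fun m => F (i + d + m) * Scoe u d m)) (gfun v F d u i) := by
  have hex : ∃ L, v.Tds (psum (fun m => F (i + d + m) * Scoe u d m)) L := by
    refine v.series_exists hcomp (fun M => ?_)
    refine ⟨⌈M / r⌉₊, fun m hm => ?_⟩
    have h1 := hFnn (i + d + m)
    have h2 := Scoe_bound (v := v) hr.le hu m
    have := v.w_mul_ge (a := 0) h1 h2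
    refine le_trans ?_ this
    rw [EReal.coe_le_coe_iff]
    have : M / r ≤ (m : ℝ) := le_trans (Nat.le_ceil _) (by exact_mod_cast hm)
    calc M = (M / r) * r := by field_simp
    _ ≤ (m:ℝ) * r := by nlinarith
    _ = 0 + (m:ℝ)*r := by ring
  rw [gfun]
  rw [dif_pos hex]
  exact hex.choose_spec

include hr hFnn in
lemma gA (hcomp : v.IsComplete) {u : ℕ → K} (hu : v.Bd u d r 0) (i : ℕ) :
    (0:EReal) ≤ v.w (gfun v F d u i) := by
  refine v.series_bound (gser_ex (v := v) hr hFnn hcomp hu i) (fun m => ?_)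
  have := v.w_mul_ge (a := 0) (hFnn (i+d+m)) (Scoe_bound (v := v) hr.le hu m)
  refine le_trans ?_ this
  rw [show (0:EReal) = ((0:ℝ):EReal) by norm_num, EReal.coe_le_coe_iff]
  positivity

include hd hr hδ hFd hFnn hgap in
lemma gB (hcomp : v.IsComplete) {u : ℕ → K} (hu : v.Bd u d r 0) (i : ℕ) :
    ((sd + δ - (i:ℝ)*r : ℝ) : EReal) ≤ v.w (gfun v F d u i - F (i + d)) := by
  have h0 : F (i + d + 0) * Scoe u d 0 = F (i + d) := by rw [Nat.add_zero, Scoe_zero, mul_one]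
  have := v.series_tail_bound (B := ((sd + δ - (i:ℝ)*r : ℝ) : EReal))
    (gser_ex (v := v) hr hFnn hcomp hu i) (fun m hm => ?_)
  · rwa [h0] at this
  · have hj : i + d + m ≠ d := by omega
    have h1 := hgap' (v := v) hgap (i + d + m) hj
    have h2 := Scoe_bound (v := v) hr.le hu m
    have := v.w_mul_ge h1 h2
    refine le_trans ?_ this
    rw [EReal.coe_le_coe_iff]
    push_cast
    nlinarith [hr.le]

include hd hr hδ hFd hFnn hgap in
lemma gLip (hcomp : v.IsComplete) {u u' : ℕ → K} {t : ℝ} (hu : v.Bd u d r 0) (hu' : v.Bd u' d r 0)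
    (hdiff : ∀ l, l < d → ((((d:ℝ) - (l:ℝ))*r + t : ℝ) : EReal) ≤ v.w (u l - u' l)) (i : ℕ) :
    ((sd + δ - (i:ℝ)*r + t : ℝ) : EReal) ≤ v.w (gfun v F d u i - gfun v F d u' i) := by
  have hTd : v.Tds (psum (fun m => F (i + d + m) * Scoe u d m - F (i + d + m) * Scoe u' d m))
      (gfun v F d u i - gfun v F d u' i) := by
    have := v.tds_sub (gser_ex (v := v) hr hFnn hcomp hu i) (gser_ex (v := v) hr hFnn hcomp hu' i)
    have he : (fun n => psum (fun m => F (i + d + m) * Scoe u d m) n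
        - psum (fun m => F (i + d + m) * Scoe u' d m) n)
        = psum (fun m => F (i + d + m) * Scoe u d m - F (i + d + m) * Scoe u' d m) := by
      funext n
      rw [psum, psum, psum, Finset.sum_sub_distrib]
    rwa [he] at this
  refine v.series_bound hTd (fun m => ?_)
  rcases Nat.eq_zero_or_pos m with hm | hm
  · subst hm
    rw [Scoe_zero, Scoe_zero, sub_self, v.map_zero']
    exact le_top
  · rw [← mul_sub]
    have hj : i + d + m ≠ d := by omega
    have h1 := hgap' (v := v) hgap (i + d + m) hj
    have h2 := Scoe_lip (v := v) hr.le hu hu' hdiff m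
    have := v.w_mul_ge h1 h2
    refine le_trans ?_ this
    rw [EReal.coe_le_coe_iff]
    push_cast
    nlinarith [hr.le]

include hd hr hδ hFd hFnn hgap in
lemma TmapA (hcomp : v.IsComplete) {u : ℕ → K} (hu : v.Bd u d r 0) :
    v.Bd (Tmap v F d u) d r δ := by
  intro n hn
  rw [Tmap, if_pos hn]
  have hFdinv : v.w (F d)⁻¹ = ((-sd : ℝ) : EReal) := v.w_inv hFd
  have hM : ((sd + ((d:ℝ) - (n:ℝ))*r + δ : ℝ) : EReal)
      ≤ v.w (F n - (∑ l ∈ Finset.range n, u l * gfun v F d u (n - l))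
        - u n * (gfun v F d u 0 - F d)) := by
    refine v.w_min_le_sub (v.w_min_le_sub ?_ ?_) ?_
    · have := hgap' (v := v) hgap n (by omega)
      refine le_trans ?_ this
      rw [EReal.coe_le_coe_iff]; ring_nf; exact le_refl _
    · refine v.w_sum (fun l hl => ?_)
      rw [Finset.mem_range] at hl
      have hsplit : u l * gfun v F d u (n - l)
          = u l * F ((n - l) + d) + u l * (gfun v F d u (n - l) - F ((n - l) + d)) := by ring
      rw [hsplit]
      refine v.w_min_le_add ?_ ?_
      · have h1 := hu l (by omega)
        have h2 := hgap' (v := v) hgap ((n - l) + d) (by omega)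
        have := v.w_mul_ge h1 h2
        refine le_trans ?_ this
        rw [EReal.coe_le_coe_iff]
        have hc : ((n - l : ℕ):ℝ) = (n:ℝ) - (l:ℝ) := by rw [Nat.cast_sub (by omega)]
        push_cast [hc]
        nlinarith [hr.le]
      · have h1 := hu l (by omega)
        have h2 := gB (v := v) hd hr hδ hFd hFnn hgap hcomp hu (n - l)
        have := v.w_mul_ge h1 h2
        refine le_trans ?_ this
        rw [EReal.coe_le_coe_iff]
        have hc : ((n - l : ℕ):ℝ) = (n:ℝ) - (l:ℝ) := by rw [Nat.cast_sub (by omega)]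
        rw [hc]
        nlinarith [hr.le]
    · have h1 := hu n hn
      have h2 := gB (v := v) hd hr hδ hFd hFnn hgap hcomp hu 0
      rw [show (0:ℕ) + d = d by omega] at h2
      have := v.w_mul_ge h1 h2
      refine le_trans ?_ this
      rw [EReal.coe_le_coe_iff]
      push_cast
      nlinarith [hr.le]
  have := v.w_mul_ge (a := -sd) (le_of_eq hFdinv.symm) hM
  refine le_trans ?_ this
  rw [EReal.coe_le_coe_iff]
  ring_nf
  exact le_refl _

end Estimates
end Core

section Core2

variable {F : ℕ → K} {d : ℕ} {r δ sd : ℝ}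

section Estimates2

variable (hd : 1 ≤ d) (hr : 0 < r) (hδ : 0 < δ)
  (hFd : v.w (F d) = (sd : EReal))
  (hFnn : ∀ j, (0:EReal) ≤ v.w (F j))
  (hgap : ∀ j, j ≠ d → ((sd + (d:ℝ)*r + δ : ℝ) : EReal) ≤ v.w (F j) + (((j:ℝ)*r : ℝ) : EReal))

include hd hr hδ hFd hFnn hgap in
lemma TmapB (hcomp : v.IsComplete) {u u' : ℕ → K} {t : ℝ} (hu : v.Bd u d r 0) (hu' : v.Bd u' d r 0)
    (hdiff : ∀ l, l < d → ((((d:ℝ) - (l:ℝ))*r + t : ℝ) : EReal) ≤ v.w (u l - u' l)) :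
    ∀ n, n < d → ((((d:ℝ) - (n:ℝ))*r + t + δ : ℝ) : EReal)
      ≤ v.w (Tmap v F d u n - Tmap v F d u' n) := by
  intro n hn
  rw [Tmap, Tmap, if_pos hn, if_pos hn, ← mul_sub]
  have hFdinv : v.w (F d)⁻¹ = ((-sd : ℝ) : EReal) := v.w_inv hFd
  set g := gfun v F d u with hg
  set g' := gfun v F d u' with hg'
  have hAA : (F n - (∑ l ∈ Finset.range n, u l * g (n - l)) - u n * (g 0 - F d))
      - (F n - (∑ l ∈ Finset.range n, u' l * g' (n - l)) - u' n * (g' 0 - F d))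
      = (∑ l ∈ Finset.range n, (u' l * g' (n - l) - u l * g (n - l)))
        + (u' n * (g' 0 - F d) - u n * (g 0 - F d)) := by
    rw [Finset.sum_sub_distrib]; ring
  rw [hAA]
  have hM : ((sd + ((d:ℝ) - (n:ℝ))*r + t + δ : ℝ) : EReal)
      ≤ v.w ((∑ l ∈ Finset.range n, (u' l * g' (n - l) - u l * g (n - l)))
        + (u' n * (g' 0 - F d) - u n * (g 0 - F d))) := by
    refine v.w_min_le_add ?_ ?_
    · refine v.w_sum (fun l hl => ?_)
      rw [Finset.mem_range] at hl
      have hsplit : u' l * g' (n - l) - u l * g (n - l)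
          = -((u l - u' l) * F ((n - l) + d) + (u l - u' l) * (g (n - l) - F ((n - l) + d))
              + u' l * (g (n - l) - g' (n - l))) := by ring
      rw [hsplit, v.map_neg']
      have hc : ((n - l : ℕ):ℝ) = (n:ℝ) - (l:ℝ) := by rw [Nat.cast_sub (by omega)]
      refine v.w_min_le_add (v.w_min_le_add ?_ ?_) ?_
      · have h1 := hdiff l (by omega)
        have h2 := hgap' (v := v) hgap ((n - l) + d) (by omega)
        refine le_trans ?_ (v.w_mul_ge h1 h2)
        rw [EReal.coe_le_coe_iff]; push_cast [hc]; nlinarith [hr.le]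
      · have h1 := hdiff l (by omega)
        have h2 := gB (v := v) hd hr hδ hFd hFnn hgap hcomp hu (n - l)
        refine le_trans ?_ (v.w_mul_ge h1 h2)
        rw [EReal.coe_le_coe_iff]; push_cast [hc]; nlinarith [hr.le]
      · have h1 := hu' l (by omega)
        have h2 := gLip (v := v) hd hr hδ hFd hFnn hgap hcomp hu hu' hdiff (n - l)
        refine le_trans ?_ (v.w_mul_ge h1 h2)
        rw [EReal.coe_le_coe_iff]; push_cast [hc]; nlinarith [hr.le]
    · have hsplit : u' n * (g' 0 - F d) - u n * (g 0 - F d)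
        = -((u n - u' n) * (g 0 - F d) + u' n * (g 0 - g' 0)) := by ring
      rw [hsplit, v.map_neg']
      refine v.w_min_le_add ?_ ?_
      · have h1 := hdiff n hn
        have h2 := gB (v := v) hd hr hδ hFd hFnn hgap hcomp hu 0
        rw [show (0:ℕ) + d = d by omega] at h2
        refine le_trans ?_ (v.w_mul_ge h1 h2)
        rw [EReal.coe_le_coe_iff]; push_cast; nlinarith [hr.le]
      · have h1 := hu' n hn
        have h2 := gLip (v := v) hd hr hδ hFd hFnn hgap hcomp hu hu' hdiff 0
        refine le_trans ?_ (v.w_mul_ge h1 h2)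
        rw [EReal.coe_le_coe_iff]; push_cast; nlinarith [hr.le]
  refine le_trans ?_ (v.w_mul_ge (a := -sd) (le_of_eq hFdinv.symm) hM)
  rw [EReal.coe_le_coe_iff]; ring_nf; exact le_refl _

end Estimates2

/-- The iteration sequence. -/
noncomputable def useq (v : AddRealValuation K) (F : ℕ → K) (d : ℕ) : ℕ → ℕ → K
  | 0 => fun _ => 0
  | (k+1) => Tmap v F d (useq v F d k)

lemma Bd_mono {u : ℕ → K} {d : ℕ} {r t t' : ℝ} (h : t' ≤ t) (hu : v.Bd u d r t) :
    v.Bd u d r t' := fun l hl =>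
  le_trans (by rw [EReal.coe_le_coe_iff]; linarith) (hu l hl)

lemma useq_zero_ge (k l : ℕ) {d : ℕ} (F : ℕ → K) (hl : d ≤ l) : useq v F d k l = 0 := by
  cases k with
  | zero => rfl
  | succ k => rw [useq, Tmap, if_neg (by omega)]

section Iter

variable (hd : 1 ≤ d) (hr : 0 < r) (hδ : 0 < δ)
  (hFd : v.w (F d) = (sd : EReal))
  (hFnn : ∀ j, (0:EReal) ≤ v.w (F j))
  (hgap : ∀ j, j ≠ d → ((sd + (d:ℝ)*r + δ : ℝ) : EReal) ≤ v.w (F j) + (((j:ℝ)*r : ℝ) : EReal))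
  (hcomp : v.IsComplete)

include hd hr hδ hFd hFnn hgap hcomp in
lemma useq_bd : ∀ k, v.Bd (useq v F d k) d r 0 := by
  intro k
  cases k with
  | zero => intro l hl; rw [show useq v F d 0 l = 0 from rfl, v.map_zero']; exact le_top
  | succ k =>
      rw [useq]
      exact Bd_mono (v := v) hδ.le
        (TmapA (v := v) hd hr hδ hFd hFnn hgap hcomp (useq_bd k))

include hd hr hδ hFd hFnn hgap hcomp in
lemma useq_step : ∀ k : ℕ, ∀ l, l < d →
    ((((d:ℝ) - (l:ℝ))*r + (k:ℝ)*δ + δ : ℝ) : EReal)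
      ≤ v.w (useq v F d (k+1) l - useq v F d k l) := by
  intro k
  induction k with
  | zero =>
      intro l hl
      have := TmapA (v := v) hd hr hδ hFd hFnn hgap hcomp
        (useq_bd (v := v) hd hr hδ hFd hFnn hgap hcomp 0) l hl
      rw [show useq v F d 1 = Tmap v F d (useq v F d 0) from rfl]
      rw [show useq v F d 0 l = 0 from rfl, sub_zero]
      refine le_trans ?_ this
      rw [EReal.coe_le_coe_iff]; push_cast; ring_nf; exact le_refl _
  | succ k ih =>
      intro l hl
      rw [show useq v F d (k+1+1) = Tmap v F d (useq v F d (k+1)) from rfl,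
        show useq v F d (k+1) = Tmap v F d (useq v F d k) from rfl]
      have := TmapB (v := v) hd hr hδ hFd hFnn hgap hcomp
        (useq_bd (v := v) hd hr hδ hFd hFnn hgap hcomp (k+1))
        (useq_bd (v := v) hd hr hδ hFd hFnn hgap hcomp k)
        (t := (k:ℝ)*δ + δ) (fun l' hl' => by
          have := ih l' hl'
          refine le_trans ?_ this
          rw [EReal.coe_le_coe_iff]; ring_nf; exact le_refl _) l hl
      refine le_trans ?_ this
      rw [EReal.coe_le_coe_iff]; push_cast; ring_nf; exact le_refl _

include hd hr hδ hFd hFnn hgap hcomp in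
lemma useq_sep : ∀ k m : ℕ, k < m → ∀ l, l < d →
    ((((d:ℝ) - (l:ℝ))*r + (k:ℝ)*δ + δ : ℝ) : EReal)
      ≤ v.w (useq v F d m l - useq v F d k l) := by
  intro k m hkm
  induction m with
  | zero => omega
  | succ m ih =>
      intro l hl
      rcases Nat.lt_or_ge k m with h | h
      · have h1 := useq_step (v := v) hd hr hδ hFd hFnn hgap hcomp m l hl
        have h2 := ih h l hl
        have : useq v F d (m+1) l - useq v F d k l
            = (useq v F d (m+1) l - useq v F d m l) + (useq v F d m l - useq v F d k l) := by ring
        rw [this]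
        refine v.w_min_le_add (le_trans ?_ h1) h2
        rw [EReal.coe_le_coe_iff]
        have : (k:ℝ) ≤ (m:ℝ) := by exact_mod_cast h.le
        nlinarith [hδ.le]
      · have : k = m := by omega
        subst this
        exact useq_step (v := v) hd hr hδ hFd hFnn hgap hcomp k l hl

include hd hr hδ hFd hFnn hgap hcomp in
lemma useq_cauchy (l : ℕ) :
    ∀ M : ℝ, ∃ N : ℕ, ∀ m ≥ N, ∀ n ≥ N,
      (M : EReal) ≤ v.w (useq v F d m l - useq v F d n l) := by
  intro M
  rcases Nat.lt_or_ge l d with hl | hl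
  · refine ⟨⌈M / δ⌉₊, fun m hm n hn => ?_⟩
    have key : ∀ a b : ℕ, ⌈M / δ⌉₊ ≤ a → a < b →
        (M : EReal) ≤ v.w (useq v F d b l - useq v F d a l) := by
      intro a b ha hab
      refine le_trans ?_ (useq_sep (v := v) hd hr hδ hFd hFnn hgap hcomp a b hab l hl)
      rw [EReal.coe_le_coe_iff]
      have h1 : M / δ ≤ (a:ℝ) := le_trans (Nat.le_ceil _) (by exact_mod_cast ha)
      have h2 : 0 ≤ ((d:ℝ) - (l:ℝ))*r := by
        have : (l:ℝ) ≤ (d:ℝ) := by exact_mod_cast hl.le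
        nlinarith [hr.le]
      have h3 : M ≤ (a:ℝ) * δ := by
        rw [div_le_iff₀ hδ] at h1; linarith
      nlinarith [hδ.le]
    rcases lt_trichotomy m n with h | h | h
    · rw [v.w_sub_symm]; exact key m n hm h
    · subst h; rw [sub_self, v.map_zero']; exact le_top
    · exact key n m hn h
  · refine ⟨0, fun m _ n _ => ?_⟩
    rw [useq_zero_ge (v := v) m l F hl, useq_zero_ge (v := v) n l F hl, sub_self, v.map_zero']
    exact le_top

end Iter
end Core2

section Core3

lemma Vcoe_zero (u : ℕ → K) (d : ℕ) : PowerSeries.coeff (R := K) 0 (Vser u d) = 1 := by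
  simp [Vser]

lemma Vcoe_le (u : ℕ → K) (d : ℕ) {k : ℕ} (h1 : 1 ≤ k) (h2 : k ≤ d) :
    PowerSeries.coeff (R := K) k (Vser u d) = u (d - k) := by
  rw [Vser, PowerSeries.coeff_mk, if_neg (by omega), if_pos h2]

lemma Vcoe_gt (u : ℕ → K) (d : ℕ) {k : ℕ} (h : d < k) :
    PowerSeries.coeff (R := K) k (Vser u d) = 0 := by
  rw [Vser, PowerSeries.coeff_mk, if_neg (by omega), if_neg (by omega)]

variable {F : ℕ → K} {d : ℕ} {r δ sd : ℝ}

variable (hd : 1 ≤ d) (hr : 0 < r) (hδ : 0 < δ)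
  (hFd : v.w (F d) = (sd : EReal))
  (hFnn : ∀ j, (0:EReal) ≤ v.w (F j))
  (hgap : ∀ j, j ≠ d → ((sd + (d:ℝ)*r + δ : ℝ) : EReal) ≤ v.w (F j) + (((j:ℝ)*r : ℝ) : EReal))
  (hcomp : v.IsComplete)

include hd hr hδ hFd hFnn hgap hcomp in
lemma core : ∃ u g : ℕ → K,
    v.Bd u d r 0 ∧
    (∀ i, (0:EReal) ≤ v.w (g i)) ∧
    (∀ n, n < d → F n = ∑ l ∈ Finset.range (n+1), u l * g (n - l)) ∧
    (∀ n, d ≤ n → F n = g (n - d) + ∑ l ∈ Finset.range d, u l * g (n - l)) := by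
  have hFd0 : F d ≠ 0 := by
    intro h
    rw [h, v.map_zero'] at hFd
    exact EReal.coe_ne_top sd hFd.symm
  -- the limit of the iteration
  have hex : ∀ l, ∃ L, v.Tds (fun k => useq v F d k l) L :=
    fun l => hcomp _ (useq_cauchy (v := v) hd hr hδ hFd hFnn hgap hcomp l)
  choose ust hust using hex
  have hustBd : v.Bd ust d r 0 := by
    intro l hl
    refine v.tds_w_le (hust l) (fun k => ?_)
    exact useq_bd (v := v) hd hr hδ hFd hFnn hgap hcomp k l hl
  -- separation of the iterates from the limit
  have hsep : ∀ k : ℕ, ∀ l, l < d →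
      ((((d:ℝ) - (l:ℝ))*r + (k:ℝ)*δ + δ : ℝ) : EReal) ≤ v.w (useq v F d k l - ust l) := by
    intro k l hl
    refine le_w_of_forall_min (fun M => ?_)
    obtain ⟨N, hN⟩ := hust l M
    set m := max (k+1) N with hm
    have hkm : k < m := lt_of_lt_of_le (Nat.lt_succ_self k) (le_max_left _ _)
    have hNm : N ≤ m := le_max_right _ _
    have hrw : useq v F d k l - ust l
        = (useq v F d m l - ust l) - (useq v F d m l - useq v F d k l) := by ring
    rw [hrw]
    refine v.w_min_le_sub (le_trans (min_le_right _ _) (hN m hNm)) (le_trans (min_le_left _ _) ?_)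
    exact useq_sep (v := v) hd hr hδ hFd hFnn hgap hcomp k m hkm l hl
  -- fixed point property
  have hfix : ∀ n, n < d → ust n = Tmap v F d ust n := by
    intro n hn
    have h0 : ust n - Tmap v F d ust n = 0 := by
      apply v.eq_zero_of_forall_le_w
      intro M
      obtain ⟨k, hk⟩ := exists_nat_ge (M / δ)
      have hkM : (M : ℝ) ≤ (k:ℝ) * δ := by
        rw [div_le_iff₀ hδ] at hk; linarith
      have hdn : 0 ≤ ((d:ℝ) - (n:ℝ))*r := by
        have : (n:ℝ) ≤ (d:ℝ) := by exact_mod_cast hn.le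
        nlinarith [hr.le]
      have hrw : ust n - Tmap v F d ust n
          = (useq v F d (k+1) n - Tmap v F d ust n) - (useq v F d (k+1) n - ust n) := by ring
      rw [hrw]
      refine v.w_min_le_sub ?_ ?_
      · -- useq (k+1) = Tmap (useq k); Lipschitz
        have := TmapB (v := v) hd hr hδ hFd hFnn hgap hcomp
          (useq_bd (v := v) hd hr hδ hFd hFnn hgap hcomp k) hustBd
          (t := (k:ℝ)*δ + δ) (fun l' hl' => by
            have := hsep k l' hl'
            refine le_trans ?_ this
            rw [EReal.coe_le_coe_iff]; ring_nf; exact le_refl _) n hn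
        rw [show useq v F d (k+1) = Tmap v F d (useq v F d k) from rfl]
        refine le_trans ?_ this
        rw [EReal.coe_le_coe_iff]
        nlinarith [hδ.le]
      · have := hsep (k+1) n hn
        refine le_trans ?_ this
        rw [EReal.coe_le_coe_iff]
        push_cast
        nlinarith [hδ.le]
    have := sub_eq_zero.mp h0
    exact this
  -- now define the data
  refine ⟨ust, gfun v F d ust, hustBd, ?_, ?_, ?_⟩
  · exact fun i => gA (v := v) hr hFnn hcomp hustBd i
  · -- low coefficients: the fixed point equations
    intro n hn
    have h1 := hfix n hn
    rw [Tmap, if_pos hn] at h1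
    have h2 := congrArg (fun x => F d * x) h1
    simp only [← mul_assoc, mul_inv_cancel₀ hFd0, one_mul] at h2
    rw [Finset.sum_range_succ]
    rw [Nat.sub_self]
    linear_combination -h2
  · -- high coefficients: the series identity
    intro n hn
    have hconst : ∀ M : ℕ,
        (∑ k ∈ Finset.range (d+1), (PowerSeries.coeff (R := K) k (Vser ust d))
          * psum (fun m => F (n + k + m) * Scoe ust d m) (M + 1 + d - k)) = F n := by
      intro M
      have hinner : ∀ k ∈ Finset.range (d+1),
          psum (fun m => F (n + k + m) * Scoe ust d m) (M + 1 + d - k)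
          = ∑ p ∈ Finset.range (M + 1 + d),
              (if k ≤ p then F (n + p) * Scoe ust d (p - k) else 0) := by
        intro k hk
        rw [Finset.mem_range] at hk
        rw [psum, Finset.sum_ite, Finset.sum_const_zero, add_zero]
        refine Finset.sum_nbij' (fun m => k + m) (fun p => p - k) ?_ ?_ ?_ ?_ ?_
        · intro m hm
          simp only [Finset.mem_range, Finset.mem_filter] at hm ⊢
          omega
        · intro p hp
          simp only [Finset.mem_range, Finset.mem_filter] at hp ⊢
          omega
        · intro m hm
          show k + m - k = m
          omega
        · intro p hp
          simp only [Finset.mem_range, Finset.mem_filter] at hp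
          show k + (p - k) = p
          omega
        · intro m hm
          rw [show n + k + m = n + (k + m) by omega, show (k + m) - k = m by omega]
      rw [Finset.sum_congr rfl (fun k hk => by rw [hinner k hk])]
      have hswap : (∑ k ∈ Finset.range (d+1), (PowerSeries.coeff (R := K) k (Vser ust d))
            * ∑ p ∈ Finset.range (M + 1 + d),
              (if k ≤ p then F (n + p) * Scoe ust d (p - k) else 0))
          = ∑ p ∈ Finset.range (M + 1 + d), ∑ k ∈ Finset.range (d+1),
              (if k ≤ p then (PowerSeries.coeff (R := K) k (Vser ust d))
                * (F (n + p) * Scoe ust d (p - k)) else 0) := by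
        rw [← Finset.sum_comm]
        refine Finset.sum_congr rfl (fun k _ => ?_)
        rw [Finset.mul_sum]
        refine Finset.sum_congr rfl (fun p _ => ?_)
        rw [mul_ite, mul_zero]
      rw [hswap]
      have hfiber : ∀ p ∈ Finset.range (M + 1 + d),
          (∑ k ∈ Finset.range (d+1),
              (if k ≤ p then (PowerSeries.coeff (R := K) k (Vser ust d))
                * (F (n + p) * Scoe ust d (p - k)) else 0))
          = F (n + p) * (if p = 0 then 1 else 0) := by
        intro p _
        rw [Finset.sum_ite, Finset.sum_const_zero, add_zero]
        have hsets : (∑ k ∈ (Finset.range (d+1)).filter (fun k => k ≤ p),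
              (PowerSeries.coeff (R := K) k (Vser ust d)) * (F (n + p) * Scoe ust d (p - k)))
            = ∑ k ∈ Finset.range (p+1),
              (PowerSeries.coeff (R := K) k (Vser ust d)) * (F (n + p) * Scoe ust d (p - k)) := by
          refine Finset.sum_subset ?_ ?_
          · intro k hk
            simp only [Finset.mem_filter, Finset.mem_range] at hk ⊢
            omega
          · intro k hk1 hk2
            simp only [Finset.mem_range] at hk1
            simp only [Finset.mem_filter, Finset.mem_range] at hk2
            rw [Vcoe_gt ust d (by omega), zero_mul]
        rw [hsets]
        rw [show (∑ k ∈ Finset.range (p+1),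
              (PowerSeries.coeff (R := K) k (Vser ust d)) * (F (n + p) * Scoe ust d (p - k)))
            = F (n + p) * ∑ k ∈ Finset.range (p+1),
              (PowerSeries.coeff (R := K) k (Vser ust d)) * Scoe ust d (p - k) from by
          rw [Finset.mul_sum]; exact Finset.sum_congr rfl (fun k _ => by ring)]
        rw [Sser_conv ust d p]
      rw [Finset.sum_congr rfl hfiber]
      rw [show (∑ p ∈ Finset.range (M + 1 + d), F (n + p) * (if p = 0 then 1 else 0))
          = ∑ p ∈ Finset.range (M + 1 + d), (if p = 0 then F (n + p) else 0) from
        Finset.sum_congr rfl (fun p _ => by split <;> simp)]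
      rw [Finset.sum_ite_eq' (Finset.range (M + 1 + d)) 0 (fun p => F (n + p))]
      rw [if_pos (Finset.mem_range.mpr (by omega)), Nat.add_zero]
    -- the approximating sums converge to the sum of the limits
    have htd : v.Tds (fun M => ∑ k ∈ Finset.range (d+1), (PowerSeries.coeff (R := K) k (Vser ust d))
          * psum (fun m => F (n + k + m) * Scoe ust d m) (M + 1 + d - k))
        (∑ k ∈ Finset.range (d+1), (PowerSeries.coeff (R := K) k (Vser ust d))
          * (gfun v F d ust (n - d + k))) := by
      refine v.tds_finset_sum _ _ _ (fun k hk => ?_)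
      rw [Finset.mem_range] at hk
      have hser := gser_ex (v := v) hr hFnn hcomp hustBd (n - d + k)
      have he : (n - d + k) + d = n + k := by omega
      rw [he] at hser
      have := v.tds_mul_const (PowerSeries.coeff (R := K) k (Vser ust d)) (v.tds_shift (1 + d - k) hser)
      have he2 : (fun M => (PowerSeries.coeff (R := K) k (Vser ust d))
            * psum (fun m => F (n + k + m) * Scoe ust d m) (M + (1 + d - k)))
          = (fun M => (PowerSeries.coeff (R := K) k (Vser ust d))
            * psum (fun m => F (n + k + m) * Scoe ust d m) (M + 1 + d - k)) := by
        funext M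
        congr 2
        omega
      rwa [he2] at this
    have hconst' : v.Tds (fun M => ∑ k ∈ Finset.range (d+1),
          (PowerSeries.coeff (R := K) k (Vser ust d))
          * psum (fun m => F (n + k + m) * Scoe ust d m) (M + 1 + d - k)) (F n) := by
      have he : (fun M : ℕ => ∑ k ∈ Finset.range (d+1), (PowerSeries.coeff (R := K) k (Vser ust d))
          * psum (fun m => F (n + k + m) * Scoe ust d m) (M + 1 + d - k))
          = fun _ => F n := funext hconst
      rw [he]
      exact v.tds_const (F n)
    have hmain := v.tds_unique htd hconst'
    rw [← hmain]
    rw [Finset.sum_range_succ']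
    rw [Vcoe_zero ust d, one_mul, Nat.add_zero]
    have hre : (∑ k ∈ Finset.range d, (PowerSeries.coeff (R := K) (k+1) (Vser ust d))
          * gfun v F d ust (n - d + (k+1)))
        = ∑ l ∈ Finset.range d, ust l * gfun v F d ust (n - l) := by
      rw [← Finset.sum_range_reflect (fun l => ust l * gfun v F d ust (n - l)) d]
      refine Finset.sum_congr rfl (fun k hk => ?_)
      rw [Finset.mem_range] at hk
      rw [Vcoe_le ust d (by omega) (by omega)]
      rw [show d - (k+1) = d - 1 - k by omega, show n - d + (k+1) = n - (d - 1 - k) by omega]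
    rw [hre]
    ring

end Core3

section Select

set_option maxHeartbeats 1000000 in
/-- Selection of a radius `r`, degree `d` and gap `δ` from the Newton polygon. -/
lemma select (s : ℕ → EReal) (hpos : ∀ j, 0 < s j) (hnb : ∀ j, s j ≠ ⊥)
    (hinf : (⨅ j, s j) = 0) :
    ∃ (d : ℕ) (r δ sd : ℝ), 1 ≤ d ∧ 0 < r ∧ 0 < δ ∧ s d = (sd : EReal) ∧
      ∀ j : ℕ, j ≠ d → ((sd + (d:ℝ)*r + δ : ℝ) : EReal) ≤ s j + (((j:ℝ)*r : ℝ) : EReal) := by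
  classical
  have hnn : ∀ j, (0:EReal) ≤ s j := fun j => (hpos j).le
  -- a first index j1 with small valuation
  have h01 : (0:EReal) < min (s 0) 1 := lt_min (hpos 0) (by norm_num)
  have hj1ex : ∃ j1, s j1 < min (s 0) 1 := by
    rw [← iInf_lt_iff, hinf]; exact h01
  obtain ⟨j1, hj1⟩ := hj1ex
  have hj1top : s j1 ≠ ⊤ := by
    intro h
    rw [h] at hj1
    exact absurd (lt_of_lt_of_le hj1 (min_le_right _ _)) (not_lt.mpr le_top)
  set s1 : ℝ := (s j1).toReal with hs1
  have hs1coe : ((s1 : ℝ) : EReal) = s j1 := EReal.coe_toReal hj1top (hnb j1)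
  have hs1pos : 0 < s1 := by
    have := hpos j1
    rw [← hs1coe] at this
    exact_mod_cast this
  have hj1s0 : s j1 < s 0 := lt_of_lt_of_le hj1 (min_le_left _ _)
  have hj1ne0 : j1 ≠ 0 := fun h => by rw [h] at hj1s0; exact lt_irrefl _ hj1s0
  have hj1ge1 : 1 ≤ j1 := Nat.one_le_iff_ne_zero.mpr hj1ne0
  have hj1posR : (0:ℝ) < (j1:ℝ) := by exact_mod_cast hj1ge1
  -- choose r1 with s1 + j1 * r1 < s 0
  have hr1ex : ∃ r1 : ℝ, 0 < r1 ∧ ((s1 + (j1:ℝ)*r1 : ℝ) : EReal) < s 0 := by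
    rcases eq_or_ne (s 0) ⊤ with h0 | h0
    · exact ⟨1, one_pos, by rw [h0]; exact EReal.coe_lt_top _⟩
    · set c : ℝ := (s 0).toReal with hc
      have hccoe : ((c : ℝ) : EReal) = s 0 := EReal.coe_toReal h0 (hnb 0)
      have hs1c : s1 < c := by
        rw [← hccoe, ← hs1coe] at hj1s0
        exact_mod_cast hj1s0
      refine ⟨(c - s1) / (2*(j1:ℝ)), div_pos (by linarith) (by positivity), ?_⟩
      rw [← hccoe, EReal.coe_lt_coe_iff]
      have he : (j1:ℝ) * ((c - s1) / (2*(j1:ℝ))) = (c - s1)/2 := by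
        field_simp
      rw [he]
      linarith
  obtain ⟨r1, hr1pos, hr1lt⟩ := hr1ex
  set A : ℝ := s1 + (j1:ℝ)*r1 with hA
  have hApos : 0 < A := by nlinarith
  -- the window bound B
  obtain ⟨B0, hB0⟩ := exists_nat_ge ((A+1)/(r1/2))
  set B : ℕ := max (B0 + 1) j1 with hB
  have hBj1 : j1 ≤ B := le_max_right _ _
  have hBbig : ∀ j : ℕ, B < j → A + 1 ≤ (j:ℝ) * (r1/2) := by
    intro j hj
    have h1 : (A+1)/(r1/2) ≤ (B0:ℝ) := hB0
    have h2 : (B0:ℝ) ≤ (j:ℝ) - 1 := by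
      have hx : B0 + 1 ≤ j := le_trans (le_max_left _ _) hj.le
      have : (B0:ℝ) + 1 ≤ (j:ℝ) := by exact_mod_cast hx
      linarith
    rw [div_le_iff₀ (by positivity)] at h1
    nlinarith [hr1pos]
  -- the candidate set
  set J : Finset ℕ := (Finset.range (B+1)).filter
    (fun j => 1 ≤ j ∧ s j < ((A + 1 : ℝ) : EReal)) with hJ
  have hj1J : j1 ∈ J := by
    rw [hJ, Finset.mem_filter, Finset.mem_range]
    refine ⟨by omega, hj1ge1, ?_⟩
    rw [← hs1coe, EReal.coe_lt_coe_iff]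
    nlinarith
  have hJne : J.Nonempty := ⟨j1, hj1J⟩
  -- facts about members of J
  have hJfin : ∀ j ∈ J, s j ≠ ⊤ := by
    intro j hj
    rw [hJ, Finset.mem_filter] at hj
    intro h
    rw [h] at hj
    exact absurd hj.2.2 (by simp)
  set r2 : ℝ := (3/4) * r1 with hr2
  set φ : ℕ → ℝ := fun j => (s j).toReal + (j:ℝ) * r2 with hφ
  set m2 : ℝ := (J.image φ).min' (hJne.image φ) with hm2
  have hm2le : ∀ j ∈ J, m2 ≤ φ j := fun j hj =>
    Finset.min'_le _ _ (Finset.mem_image_of_mem φ hj)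
  obtain ⟨d, hdJ, hdm⟩ : ∃ d ∈ J, φ d = m2 := by
    have := Finset.min'_mem (J.image φ) (hJne.image φ)
    rw [Finset.mem_image] at this
    obtain ⟨d, hd1, hd2⟩ := this
    exact ⟨d, hd1, hd2⟩
  set Jmin : Finset ℕ := J.filter (fun j => φ j = m2) with hJmin
  have hdJmin : d ∈ Jmin := by rw [hJmin, Finset.mem_filter]; exact ⟨hdJ, hdm⟩
  set D : ℕ := Jmin.max' ⟨d, hdJmin⟩ with hD
  have hDJmin : D ∈ Jmin := Finset.max'_mem _ _
  have hDJ : D ∈ J := (Finset.mem_filter.mp hDJmin).1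
  have hDm : φ D = m2 := (Finset.mem_filter.mp hDJmin).2
  have hDmax : ∀ j ∈ Jmin, j ≤ D := fun j hj => Finset.le_max' _ _ hj
  set Jc : Finset ℕ := J \ Jmin with hJc
  set gap0 : ℝ := if h : Jc.Nonempty
    then ((Jc.image (fun j => φ j - m2)).min' (h.image (fun j => φ j - m2))) else 1 with hgap0
  have hgap0pos : 0 < gap0 := by
    rw [hgap0]
    split
    · rename_i h
      obtain ⟨j, hj, he⟩ := Finset.mem_image.mp
        (Finset.min'_mem (Jc.image (fun j => φ j - m2)) (h.image (fun j => φ j - m2)))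
      rw [← he]
      have hjJ : j ∈ J := (Finset.mem_sdiff.mp hj).1
      have hjnm : j ∉ Jmin := (Finset.mem_sdiff.mp hj).2
      have h1 : m2 ≤ φ j := hm2le j hjJ
      have hne : φ j ≠ m2 := fun hc => hjnm (Finset.mem_filter.mpr ⟨hjJ, hc⟩)
      have : m2 < φ j := lt_of_le_of_ne h1 (Ne.symm hne)
      linarith
    · norm_num
  have hgap0le : ∀ j ∈ J, j ∉ Jmin → gap0 ≤ φ j - m2 := by
    intro j hj hnm
    have hne : Jc.Nonempty := ⟨j, Finset.mem_sdiff.mpr ⟨hj, hnm⟩⟩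
    rw [hgap0, dif_pos hne]
    exact Finset.min'_le _ _ (Finset.mem_image_of_mem _ (Finset.mem_sdiff.mpr ⟨hj, hnm⟩))
  set ε : ℝ := min (min (gap0 / (2*((B:ℝ)+1))) (r1/8)) (1/2) with hε
  have hεpos : 0 < ε := by
    refine lt_min (lt_min ?_ ?_) ?_
    · positivity
    · positivity
    · norm_num
  have hε1 : ε ≤ gap0 / (2*((B:ℝ)+1)) := le_trans (min_le_left _ _) (min_le_left _ _)
  have hε2 : ε ≤ r1/8 := le_trans (min_le_left _ _) (min_le_right _ _)
  set r : ℝ := r2 - ε with hrdef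
  have hrpos : 0 < r := by rw [hrdef, hr2]; linarith
  have hrler2 : r ≤ r2 := by rw [hrdef]; linarith
  have hr2ler1 : r2 ≤ r1 := by rw [hr2]; linarith
  have hrhalf : r1/2 ≤ r := by rw [hrdef, hr2]; linarith
  have hsDfin : s D ≠ ⊤ := hJfin D hDJ
  set sd : ℝ := (s D).toReal with hsd
  have hsdcoe : ((sd:ℝ) : EReal) = s D := EReal.coe_toReal hsDfin (hnb D)
  have hsdnn : 0 ≤ sd := by
    have := hnn D
    rw [← hsdcoe] at this
    exact_mod_cast this
  have hDJ' := hDJ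
  rw [hJ, Finset.mem_filter, Finset.mem_range] at hDJ'
  have hDge1 : 1 ≤ D := hDJ'.2.1
  have hDleB : D ≤ B := by omega
  have hφD : φ D = sd + (D:ℝ)*r2 := by rw [hφ]
  have hφj1' : φ j1 = s1 + (j1:ℝ)*r2 := by rw [hφ]
  clear_value J Jmin D Jc gap0 ε r sd φ m2 s1 A B r2
  have hmrA : sd + (D:ℝ)*r ≤ A := by
    have h1 : (D:ℝ)*r ≤ (D:ℝ)*r2 := mul_le_mul_of_nonneg_left hrler2 (Nat.cast_nonneg D)
    have h2 : m2 ≤ φ j1 := hm2le j1 hj1J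
    have h3 : (j1:ℝ)*r2 ≤ (j1:ℝ)*r1 := mul_le_mul_of_nonneg_left hr2ler1 (Nat.cast_nonneg j1)
    rw [hφj1'] at h2
    rw [hφD] at hDm
    rw [hA]
    linarith
  have hδ0ex : ∃ δ0 : ℝ, 0 < δ0 ∧ ((A + δ0 : ℝ):EReal) ≤ s 0 := by
    rcases eq_or_ne (s 0) ⊤ with h0 | h0
    · exact ⟨1, one_pos, by rw [h0]; exact le_top⟩
    · have hccoe : (((s 0).toReal : ℝ) : EReal) = s 0 := EReal.coe_toReal h0 (hnb 0)
      set c0 : ℝ := (s 0).toReal with hc0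
      have hAc : A < c0 := by
        rw [← hccoe] at hr1lt
        exact_mod_cast hr1lt
      refine ⟨c0 - A, by linarith, ?_⟩
      rw [← hccoe, EReal.coe_le_coe_iff]
      linarith
  obtain ⟨δ0, hδ0pos, hδ0⟩ := hδ0ex
  set δ : ℝ := min (min ε (gap0/2)) (min 1 δ0) with hδdef
  have hδpos : 0 < δ :=
    lt_min (lt_min hεpos (by linarith)) (lt_min one_pos hδ0pos)
  have hδε : δ ≤ ε := le_trans (min_le_left _ _) (min_le_left _ _)
  have hδg : δ ≤ gap0/2 := le_trans (min_le_left _ _) (min_le_right _ _)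
  have hδ1 : δ ≤ 1 := le_trans (min_le_right _ _) (min_le_left _ _)
  have hδδ0 : δ ≤ δ0 := le_trans (min_le_right _ _) (min_le_right _ _)
  refine ⟨D, r, δ, sd, hDge1, hrpos, hδpos, hsdcoe.symm, ?_⟩
  intro j hjD
  rcases eq_or_ne (s j) ⊤ with hjt | hjt
  · rw [hjt, EReal.top_add_coe]; exact le_top
  have hjcoe : (((s j).toReal : ℝ) : EReal) = s j := EReal.coe_toReal hjt (hnb j)
  set t : ℝ := (s j).toReal with ht
  have htnn : 0 ≤ t := by
    have := hnn j
    rw [← hjcoe] at this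
    exact_mod_cast this
  rw [← hjcoe, ← EReal.coe_add, EReal.coe_le_coe_iff]
  have hφjt : φ j = t + (j:ℝ)*r2 := by rw [hφ]
  by_cases hjJ : j ∈ J
  · by_cases hjm : j ∈ Jmin
    · have hjD' : j < D := lt_of_le_of_ne (hDmax j hjm) hjD
      have hφj : φ j = m2 := by
        rw [hJmin, Finset.mem_filter] at hjm
        exact hjm.2
      rw [hφjt] at hφj
      rw [hφD] at hDm
      have hcast : (j:ℝ) + 1 ≤ (D:ℝ) := by exact_mod_cast hjD'
      rw [hrdef]
      have hp : (0:ℝ) ≤ ((D:ℝ) - (j:ℝ) - 1) * ε :=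
        mul_nonneg (by linarith) hεpos.le
      nlinarith [hp]
    · have hg := hgap0le j hjJ hjm
      rw [hφjt] at hg
      rw [hφD] at hDm
      have hjB : j ≤ B := by
        have := hjJ
        rw [hJ, Finset.mem_filter, Finset.mem_range] at this
        omega
      have hjBr : (j:ℝ) ≤ (B:ℝ) := by exact_mod_cast hjB
      have hDBr : (D:ℝ) ≤ (B:ℝ) := by exact_mod_cast hDleB
      have hBε : (B:ℝ)*ε ≤ gap0/2 := by
        have hB1 : (0:ℝ) < 2*((B:ℝ)+1) := by positivity
        rw [le_div_iff₀ hB1] at hε1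
        linarith [hεpos.le]
      rw [hrdef]
      have hp1 : (j:ℝ)*ε ≤ (B:ℝ)*ε := mul_le_mul_of_nonneg_right hjBr hεpos.le
      have hp2 : (0:ℝ) ≤ (D:ℝ)*ε := mul_nonneg (Nat.cast_nonneg D) hεpos.le
      nlinarith [hp1, hp2]
  · rcases Nat.eq_zero_or_pos j with hj0 | hj0
    · subst hj0
      have hA0 : A + δ0 ≤ t := by
        rw [← hjcoe, EReal.coe_le_coe_iff] at hδ0
        exact hδ0
      have : (0:ℝ) ≤ (0:ℕ) * r := by norm_num
      push_cast
      linarith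
    · by_cases hjB : j ≤ B
      · have hnotin : ¬ (s j < ((A + 1 : ℝ) : EReal)) := by
          intro hc
          exact hjJ (by
            rw [hJ, Finset.mem_filter, Finset.mem_range]
            exact ⟨by omega, hj0, hc⟩)
        have hA1 : A + 1 ≤ t := by
          have := not_lt.mp hnotin
          rw [← hjcoe, EReal.coe_le_coe_iff] at this
          exact this
        have hjr : 0 ≤ (j:ℝ)*r := by positivity
        linarith
      · have hbig := hBbig j (by omega)
        have hjr : (j:ℝ)*(r1/2) ≤ (j:ℝ)*r := by
          have : (0:ℝ) ≤ (j:ℝ) := Nat.cast_nonneg j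
          nlinarith
        linarith

end Select

section Algebraic

/-- The maximal ideal of the valuation ring. -/
def mIdeal : Ideal v.subring where
  carrier := {x | 0 < v.w (x : K)}
  zero_mem' := by
    show (0:EReal) < v.w ((0 : v.subring) : K)
    rw [show (((0 : v.subring)) : K) = 0 from rfl, v.map_zero']
    exact (by norm_num : (0:EReal) < ⊤)
  add_mem' := by
    intro a b ha hb
    show (0:EReal) < v.w ((a + b : v.subring) : K)
    rw [show ((a + b : v.subring) : K) = (a:K) + (b:K) from rfl]
    exact lt_of_lt_of_le (lt_min ha hb) (v.add_le' _ _)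
  smul_mem' := by
    intro c x hx
    show (0:EReal) < v.w ((c * x : v.subring) : K)
    rw [show ((c * x : v.subring) : K) = (c:K) * (x:K) from rfl, v.map_mul']
    calc (0:EReal) < v.w (x:K) := hx
    _ = 0 + v.w (x:K) := (zero_add _).symm
    _ ≤ v.w (c:K) + v.w (x:K) := add_le_add c.2 le_rfl

lemma mem_mIdeal_iff {x : v.subring} : x ∈ v.mIdeal ↔ 0 < v.w (x : K) := Iff.rfl

lemma mIdeal_prime : (v.mIdeal).IsPrime := by
  constructor
  · rw [Ideal.ne_top_iff_one]
    intro h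
    rw [mem_mIdeal_iff] at h
    rw [show (((1 : v.subring)) : K) = 1 from rfl, v.map_one'] at h
    exact lt_irrefl _ h
  · intro x y hxy
    rw [mem_mIdeal_iff] at hxy ⊢
    rw [mem_mIdeal_iff]
    rw [show ((x * y : v.subring) : K) = (x:K) * (y:K) from rfl, v.map_mul'] at hxy
    by_contra hc
    push_neg at hc
    obtain ⟨h1, h2⟩ := hc
    have e1 : v.w (x:K) = 0 := le_antisymm h1 x.2
    have e2 : v.w (y:K) = 0 := le_antisymm h2 y.2
    rw [e1, e2] at hxy
    norm_num at hxy

end Algebraic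

end AddRealValuation

section MonicFactor

open Polynomial

/-- Every monic polynomial of positive degree over a domain is a product of
monic irreducible polynomials. -/
lemma monic_factor_irred {R : Type*} [CommRing R] [IsDomain R] (N : ℕ) :
    ∀ p : R[X], p.natDegree ≤ N → p.Monic → 0 < p.natDegree →
    ∃ M : Multiset R[X], (∀ q ∈ M, q.Monic ∧ Irreducible q) ∧ p = M.prod := by
  induction N with
  | zero => intro p hpN _ hpd; omega
  | succ N ih =>
      intro p hpN hpm hpd
      by_cases hirr : Irreducible p
      · refine ⟨{p}, ?_, by simp⟩
        intro q hq
        rw [Multiset.mem_singleton] at hq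
        subst hq
        exact ⟨hpm, hirr⟩
      · have hpu : ¬ IsUnit p := by
          intro h
          have := Polynomial.natDegree_eq_zero_of_isUnit h
          omega
        rw [irreducible_iff] at hirr
        push_neg at hirr
        obtain ⟨a, b, hab, hau, hbu⟩ := hirr hpu
        have hp0 : p ≠ 0 := hpm.ne_zero
        have ha0 : a ≠ 0 := fun h => hp0 (by rw [hab, h, zero_mul])
        have hb0 : b ≠ 0 := fun h => hp0 (by rw [hab, h, mul_zero])
        have hdeg : a.natDegree + b.natDegree = p.natDegree := by
          rw [hab, Polynomial.natDegree_mul ha0 hb0]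
        have hlc : a.leadingCoeff * b.leadingCoeff = 1 := by
          rw [← Polynomial.leadingCoeff_mul, ← hab]
          exact hpm
        have hada : 0 < a.natDegree := by
          rcases Nat.eq_zero_or_pos a.natDegree with h | h
          · exfalso
            obtain ⟨c, hc⟩ := Polynomial.natDegree_eq_zero.mp h
            apply hau
            rw [← hc]
            rw [← hc] at hlc
            rw [Polynomial.leadingCoeff_C] at hlc
            exact (Polynomial.isUnit_C).mpr (IsUnit.of_mul_eq_one _ hlc)
          · exact h
        have hbdb : 0 < b.natDegree := by
          rcases Nat.eq_zero_or_pos b.natDegree with h | h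
          · exfalso
            obtain ⟨c, hc⟩ := Polynomial.natDegree_eq_zero.mp h
            apply hbu
            rw [← hc]
            rw [← hc] at hlc
            rw [Polynomial.leadingCoeff_C] at hlc
            exact (Polynomial.isUnit_C).mpr (IsUnit.of_mul_eq_one _ (by
              rw [mul_comm] at hlc; exact hlc))
          · exact h
        -- normalize
        have hua : IsUnit a.leadingCoeff := IsUnit.of_mul_eq_one _ hlc
        obtain ⟨ua, hua'⟩ := hua
        set a' : R[X] := a * Polynomial.C ((ua⁻¹ : Rˣ) : R) with ha'
        set b' : R[X] := b * Polynomial.C ((ua : Rˣ) : R) with hb'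
        have hab' : p = a' * b' := by
          rw [ha', hb', hab]
          rw [show a * Polynomial.C ((ua⁻¹ : Rˣ) : R) * (b * Polynomial.C ((ua : Rˣ) : R))
            = a * b * (Polynomial.C ((ua⁻¹ : Rˣ) : R) * Polynomial.C ((ua : Rˣ) : R)) by ring]
          rw [← Polynomial.C_mul]
          rw [show ((ua⁻¹ : Rˣ) : R) * ((ua : Rˣ) : R) = 1 by
            rw [← Units.val_mul, inv_mul_cancel]; rfl]
          simp
        have ham : a'.Monic := by
          rw [ha', Polynomial.Monic, Polynomial.leadingCoeff_mul, Polynomial.leadingCoeff_C]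
          rw [← hua', ← Units.val_mul, mul_inv_cancel, Units.val_one]
        have hbm : b'.Monic := by
          rw [hb', Polynomial.Monic, Polynomial.leadingCoeff_mul, Polynomial.leadingCoeff_C]
          have h2 : b.leadingCoeff * a.leadingCoeff = 1 := by rw [mul_comm]; exact hlc
          rw [hua']
          exact h2
        have hda' : a'.natDegree = a.natDegree := by
          rw [ha']
          rw [Polynomial.natDegree_mul ha0 (by
            intro h
            rw [← Polynomial.C_0] at h
            have := Polynomial.C_injective h
            exact ua⁻¹.ne_zero this)]
          simp
        have hdb' : b'.natDegree = b.natDegree := by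
          rw [hb']
          rw [Polynomial.natDegree_mul hb0 (by
            intro h
            rw [← Polynomial.C_0] at h
            have := Polynomial.C_injective h
            exact ua.ne_zero this)]
          simp
        obtain ⟨Ma, hMa1, hMa2⟩ := ih a' (by omega) ham (by omega)
        obtain ⟨Mb, hMb1, hMb2⟩ := ih b' (by omega) hbm (by omega)
        refine ⟨Ma + Mb, ?_, ?_⟩
        · intro q hq
          rw [Multiset.mem_add] at hq
          rcases hq with h | h
          · exact hMa1 q h
          · exact hMb1 q h
        · rw [Multiset.prod_add, ← hMa2, ← hMb2, hab']

end MonicFactor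

/-- `𝓕` is a defining family of rank-1 valuations exhibiting the domain `D`
(with fraction field `F`) as a generalized Krull domain:
(a) for each `v ∈ 𝓕` the valuation ring of `v` is the localization of `D`
at the prime `{a : v a > 0}`; (b) `⋂ D_v = D`; (c) each nonzero `a ∈ D`
satisfies `v a = 0` for all but finitely many `v ∈ 𝓕`. -/
def IsGKFamily (D : Type*) [CommRing D] [IsDomain D] (F : Type*) [Field F]
    [Algebra D F] [IsFractionRing D F] (𝓕 : Set (AddRealValuation F)) : Prop :=
  (∀ u ∈ 𝓕, ∀ x : F, 0 ≤ u.w x ↔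
    ∃ a b : D, b ≠ 0 ∧ ¬ 0 < u.w (algebraMap D F b) ∧ x * algebraMap D F b = algebraMap D F a) ∧
  (∀ x : F, (∀ u ∈ 𝓕, 0 ≤ u.w x) → ∃ a : D, x = algebraMap D F a) ∧
  (∀ a : D, a ≠ 0 → {u ∈ 𝓕 | u.w (algebraMap D F a) ≠ 0}.Finite)

open AddRealValuation in
set_option maxHeartbeats 1000000 in
set_option synthInstance.maxHeartbeats 400000 in
/-- Let `K` be complete with respect to a non-discrete rank-1 valuation,
`R` its valuation ring, `𝔪` its maximal ideal. If `f ∈ R[[X]]` satisfies `w f = 0`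
and all coefficients of `f` lie in `𝔪`, then `f` has a monic irreducible polynomial
factor `q ∈ R[X]` of positive degree with constant term in `𝔪`, such that the
quotient `g = f / q` again satisfies `w g = 0` with all coefficients in `𝔪`. -/
theorem statement7 {K : Type*} [Field K] (v : AddRealValuation K)
    (hcomp : v.IsComplete) (hnd : v.Nondiscrete)
    (f : PowerSeries v.subring) (hwf : v.wR f = 0)
    (hm : ∀ i : ℕ, 0 < v.w ((PowerSeries.coeff (R := v.subring) i f : v.subring) : K)) :
    ∃ q : Polynomial v.subring, q.Monic ∧ Irreducible q ∧ 0 < q.natDegree ∧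
      0 < v.w ((q.coeff 0 : v.subring) : K) ∧
      ∃ g : PowerSeries v.subring,
        f = (q : PowerSeries v.subring) * g ∧
        v.wR g = 0 ∧
        ∀ i : ℕ, 0 < v.w ((PowerSeries.coeff (R := v.subring) i g : v.subring) : K) := by
  classical
  set F : ℕ → K := fun j => ((PowerSeries.coeff (R := v.subring) j f : v.subring) : K) with hF
  obtain ⟨d, r, δ, sd, hd, hr, hδ, hFd, hgap⟩ :=
    AddRealValuation.select (fun j => v.w (F j)) (fun j => hm j)
      (fun j => v.w_ne_bot (F j)) hwf
  have hFnn : ∀ j, (0:EReal) ≤ v.w (F j) := fun j => (hm j).le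
  obtain ⟨u, g, hu, hg, hlow, hhigh⟩ :=
    AddRealValuation.core (v := v) hd hr hδ hFd hFnn hgap hcomp
  -- coefficients of u lie in the valuation ring (indeed in the maximal ideal)
  have humem : ∀ l, l < d → (0:EReal) ≤ v.w (u l) := by
    intro l hl
    refine le_trans ?_ (hu l hl)
    rw [show (0:EReal) = ((0:ℝ):EReal) by norm_num, EReal.coe_le_coe_iff]
    have h1 : (l:ℝ) ≤ (d:ℝ) := by exact_mod_cast hl.le
    nlinarith [hr.le]
  have humem' : ∀ l, l < d → (0:EReal) < v.w (u l) := by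
    intro l hl
    refine lt_of_lt_of_le ?_ (hu l hl)
    rw [show (0:EReal) = ((0:ℝ):EReal) by norm_num, EReal.coe_lt_coe_iff]
    have h1 : (l:ℝ) + 1 ≤ (d:ℝ) := by exact_mod_cast hl
    nlinarith [hr]
  set uR : ℕ → v.subring := fun l => if h : l < d then ⟨u l, humem l h⟩ else 0 with huR
  set qp : Polynomial v.subring :=
    Polynomial.X ^ d + ∑ l ∈ Finset.range d, Polynomial.C (uR l) * Polynomial.X ^ l with hqp
  have hqpm : qp.Monic := by
    rw [hqp]
    apply Polynomial.monic_X_pow_add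
    refine lt_of_le_of_lt (Polynomial.degree_sum_le _ _) ?_
    rw [Finset.sup_lt_iff (by exact_mod_cast WithBot.bot_lt_coe d)]
    intro l hl
    refine lt_of_le_of_lt (Polynomial.degree_C_mul_X_pow_le _ _) ?_
    exact_mod_cast Finset.mem_range.mp hl
  have hqpc : ∀ m : ℕ, qp.coeff m = if m = d then 1 else (if m < d then uR m else 0) := by
    intro m
    rw [hqp, Polynomial.coeff_add, Polynomial.coeff_X_pow, Polynomial.finset_sum_coeff]
    have hterm : ∀ l ∈ Finset.range d, (Polynomial.C (uR l) * Polynomial.X ^ l).coeff m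
        = if l = m then uR l else 0 := by
      intro l _
      rw [Polynomial.coeff_C_mul, Polynomial.coeff_X_pow]
      by_cases h : m = l
      · subst h; rw [if_pos rfl, if_pos rfl, mul_one]
      · rw [if_neg h, if_neg (fun hc => h hc.symm), mul_zero]
    rw [Finset.sum_congr rfl hterm, Finset.sum_ite_eq' (Finset.range d) m uR]
    by_cases h1 : m = d
    · subst h1
      simp [Finset.notMem_range_self]
    · by_cases h2 : m < d
      · simp [h1, h2, Finset.mem_range]
      · simp [h1, h2, Finset.mem_range]
  set g0 : PowerSeries v.subring := PowerSeries.mk (fun i => ⟨g i, hg i⟩) with hg0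
  -- the factorization f = qp * g0
  have hfq : f = (qp : PowerSeries v.subring) * g0 := by
    ext n
    show ((PowerSeries.coeff (R := v.subring) n f : v.subring) : K)
      = ((PowerSeries.coeff (R := v.subring) n ((qp : PowerSeries v.subring) * g0) : v.subring) : K)
    rw [PowerSeries.coeff_mul]
    push_cast
    rw [Finset.Nat.sum_antidiagonal_eq_sum_range_succ_mk]
    have hterm : ∀ k, ((qp.coeff k : v.subring) : K)
        * ((PowerSeries.coeff (R := v.subring) (n - k) g0 : v.subring) : K)
        = (if k = d then 1 else if k < d then u k else 0) * g (n - k) := by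
      intro k
      rw [hqpc k, hg0, PowerSeries.coeff_mk]
      congr 1
      by_cases h1 : k = d
      · subst h1; rw [if_pos rfl, if_pos rfl]; rfl
      · rw [if_neg h1, if_neg h1]
        by_cases h2 : k < d
        · rw [if_pos h2, if_pos h2]
          simp [huR, h2]
        · rw [if_neg h2, if_neg h2]; rfl
    calc ((PowerSeries.coeff (R := v.subring) n f : v.subring) : K) = F n := rfl
    _ = ∑ k ∈ Finset.range (n+1),
          (if k = d then 1 else if k < d then u k else 0) * g (n - k) := by
        rcases Nat.lt_or_ge n d with hn | hn
        · rw [hlow n hn]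
          refine Finset.sum_congr rfl (fun k hk => ?_)
          rw [Finset.mem_range] at hk
          rw [if_neg (by omega), if_pos (by omega)]
        · rw [hhigh n hn]
          rw [show ∑ k ∈ Finset.range (n+1),
              (if k = d then 1 else if k < d then u k else 0) * g (n - k)
            = ∑ k ∈ Finset.range (d+1),
              (if k = d then 1 else if k < d then u k else 0) * g (n - k) from by
            symm
            refine Finset.sum_subset ?_ ?_
            · intro k hk
              simp only [Finset.mem_range] at hk ⊢
              omega
            · intro k hk1 hk2
              simp only [Finset.mem_range] at hk1 hk2
              rw [if_neg (by omega), if_neg (by omega), zero_mul]]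
          rw [Finset.sum_range_succ, if_pos rfl, one_mul]
          rw [show ∑ k ∈ Finset.range d,
              (if k = d then 1 else if k < d then u k else 0) * g (n - k)
            = ∑ k ∈ Finset.range d, u k * g (n - k) from
            Finset.sum_congr rfl (fun k hk => by
              rw [Finset.mem_range] at hk
              rw [if_neg (by omega), if_pos hk])]
          ring
    _ = ∑ k ∈ Finset.range (n+1),
          (((qp.coeff k : v.subring) : K)
            * ((PowerSeries.coeff (R := v.subring) (n - k) g0 : v.subring) : K)) := by
        exact Finset.sum_congr rfl (fun k _ => (hterm k).symm)
  -- degree of qp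
  have hqpd : qp.natDegree = d := by
    apply le_antisymm
    · rw [Polynomial.natDegree_le_iff_coeff_eq_zero]
      intro m hm'
      rw [hqpc m, if_neg (by omega), if_neg (by omega)]
    · apply Polynomial.le_natDegree_of_ne_zero
      rw [hqpc d, if_pos rfl]
      exact one_ne_zero
  -- factor qp into monic irreducibles
  obtain ⟨M, hM1, hM2⟩ := monic_factor_irred qp.natDegree qp le_rfl hqpm (by omega)
  -- the constant term of qp has positive valuation
  have hq0 : 0 < v.w ((qp.coeff 0 : v.subring) : K) := by
    rw [hqpc 0, if_neg (by omega), if_pos (by omega)]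
    rw [show ((uR 0 : v.subring) : K) = u 0 from by simp [huR, (by omega : 0 < d)]]
    exact humem' 0 (by omega)
  -- pick a factor with constant term of positive valuation
  have hexq : ∃ q1 ∈ M, 0 < v.w ((q1.eval 0 : v.subring) : K) := by
    by_contra hc
    push_neg at hc
    have hall : ∀ q1 ∈ M, v.w ((q1.eval 0 : v.subring) : K) = 0 := fun q1 h =>
      le_antisymm (hc q1 h) (q1.eval 0).2
    have hprod : ∀ (S : Multiset (Polynomial v.subring)),
        (∀ q1 ∈ S, v.w ((q1.eval 0 : v.subring) : K) = 0) →
        v.w (((S.prod).eval 0 : v.subring) : K) = 0 := by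
      intro S
      induction S using Multiset.induction_on with
      | empty => intro _; simp [v.map_one']
      | cons a s ih =>
          intro hS
          rw [Multiset.prod_cons, Polynomial.eval_mul]
          rw [show (((a.eval 0 * (s.prod).eval 0 : v.subring)) : K)
            = ((a.eval 0 : v.subring) : K) * (((s.prod).eval 0 : v.subring) : K) from rfl]
          rw [v.map_mul']
          rw [hS a (Multiset.mem_cons_self a s),
            ih (fun q hq => hS q (Multiset.mem_cons_of_mem hq)), add_zero]
    have h0 := hprod M hall
    rw [← hM2] at h0
    rw [← Polynomial.coeff_zero_eq_eval_zero] at h0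
    rw [h0] at hq0
    exact lt_irrefl _ hq0
  obtain ⟨q1, hq1M, hq1v⟩ := hexq
  have hq1m : q1.Monic := (hM1 q1 hq1M).1
  have hq1irr : Irreducible q1 := (hM1 q1 hq1M).2
  have hq1d : 0 < q1.natDegree := by
    rcases Nat.eq_zero_or_pos q1.natDegree with h | h
    · exfalso
      have h1 := hq1m.natDegree_eq_zero.mp h
      exact hq1irr.not_isUnit (h1 ▸ isUnit_one)
    · exact h
  -- the cofactor
  set gfin : PowerSeries v.subring :=
    (((M.erase q1).prod : Polynomial v.subring) : PowerSeries v.subring) * g0 with hgfin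
  have hsplit : qp = q1 * (M.erase q1).prod := by
    rw [hM2]
    exact (Multiset.prod_erase hq1M).symm
  have hffin : f = (q1 : PowerSeries v.subring) * gfin := by
    rw [hfq, hsplit, hgfin, Polynomial.coe_mul, mul_assoc]
  -- the reduction mod the maximal ideal
  haveI hprime : (v.mIdeal).IsPrime := v.mIdeal_prime
  haveI : IsDomain (v.subring ⧸ v.mIdeal) := Ideal.Quotient.isDomain v.mIdeal
  haveI : Nontrivial (v.subring ⧸ v.mIdeal) := Ideal.Quotient.nontrivial_iff.mpr hprime.ne_top
  set ψ : PowerSeries v.subring →+* PowerSeries (v.subring ⧸ v.mIdeal) :=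
    PowerSeries.map (Ideal.Quotient.mk v.mIdeal) with hψ
  have hψf : ψ f = 0 := by
    ext i
    rw [hψ, PowerSeries.coeff_map, map_zero, Ideal.Quotient.eq_zero_iff_mem]
    exact hm i
  have hψq : ψ (q1 : PowerSeries v.subring) ≠ 0 := by
    intro h
    have h1 := congrArg (PowerSeries.coeff (R := v.subring ⧸ v.mIdeal) q1.natDegree) h
    rw [hψ, PowerSeries.coeff_map, Polynomial.coeff_coe, hq1m.coeff_natDegree,
      map_one, map_zero] at h1
    exact one_ne_zero h1
  have hψg : ψ gfin = 0 := by
    have h1 := congrArg ψ hffin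
    rw [map_mul, hψf] at h1
    exact (mul_eq_zero.mp h1.symm).resolve_left hψq
  have hgmem : ∀ i : ℕ, 0 < v.w ((PowerSeries.coeff (R := v.subring) i gfin : v.subring) : K) := by
    intro i
    have h1 := congrArg (PowerSeries.coeff (R := v.subring ⧸ v.mIdeal) i) hψg
    rw [hψ, PowerSeries.coeff_map, map_zero] at h1
    exact (v.mem_mIdeal_iff).mp (Ideal.Quotient.eq_zero_iff_mem.mp h1)
  -- the valuation of the cofactor is zero
  have hwg : v.wR gfin = 0 := by
    apply le_antisymm
    · rw [← hwf]
      refine le_iInf (fun n => ?_)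
      have hc : ((PowerSeries.coeff (R := v.subring) n f : v.subring) : K)
          = ∑ p ∈ Finset.HasAntidiagonal.antidiagonal n,
              ((PowerSeries.coeff (R := v.subring) p.1 (q1 : PowerSeries v.subring) : v.subring) : K)
              * ((PowerSeries.coeff (R := v.subring) p.2 gfin : v.subring) : K) := by
        rw [hffin, PowerSeries.coeff_mul]
        push_cast
        rfl
      rw [hc]
      refine v.w_sum (fun p _ => ?_)
      rw [v.map_mul']
      calc v.wR gfin = 0 + v.wR gfin := (zero_add _).symm
      _ ≤ v.w ((PowerSeries.coeff (R := v.subring) p.1 (q1 : PowerSeries v.subring) : v.subring) : K)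
            + v.w ((PowerSeries.coeff (R := v.subring) p.2 gfin : v.subring) : K) := by
          refine add_le_add (PowerSeries.coeff (R := v.subring) p.1 (q1 : PowerSeries v.subring)).2 ?_
          exact iInf_le _ p.2
    · exact le_iInf (fun i => (PowerSeries.coeff (R := v.subring) i gfin).2)
  exact ⟨q1, hq1m, hq1irr, hq1d,
    (by rw [Polynomial.coeff_zero_eq_eval_zero]; exact hq1v), gfin, hffin, hwg, hgmem⟩
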